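/- Let q be a self-join-free Boolean conjunctive query with n atoms whose attack graph is acyclic, and let db be a database instance. Let ≺1 and ≺2 be two topological sorts of the attack graph of q. Then every n-∀embedding of q in db relative to ≺1 is an n-∀embedding of q in db relative to ≺2. -/

import Mathlib

open scoped Classical

/-! ## Variables, constants, relation names -/

abbrev Var : Type := ℕ
abbrev RelName : Type := ℕ

/-- A term: a variable or a constant (a non-negative rational). -/
inductive Trm : Type where
  | var : Var → Trm
  | const : ℚ≥0 → Trm
deriving DecidableEq

/-- An atom `R(x̲, y)`: relation name, primary-key arguments, remaining arguments. -/
structure DBAtom : Type where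
  rel : RelName
  keyArgs : List Trm
  nonkeyArgs : List Trm
deriving DecidableEq, Inhabited

/-- A fact: an atom without variables. -/
structure DBFact : Type where
  rel : RelName
  keyArgs : List ℚ≥0
  nonkeyArgs : List ℚ≥0
deriving DecidableEq

def Trm.var? : Trm → Option Var
  | .var v => some v
  | .const _ => none

def Trm.const? : Trm → Option ℚ≥0
  | .var _ => none
  | .const c => some c

def DBAtom.keyVars (F : DBAtom) : Finset Var := (F.keyArgs.filterMap Trm.var?).toFinset

def DBAtom.allVars (F : DBAtom) : Finset Var :=
  ((F.keyArgs ++ F.nonkeyArgs).filterMap Trm.var?).toFinset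

def DBAtom.notkeyVars (F : DBAtom) : Finset Var := F.allVars \ F.keyVars

def qVars (q : List DBAtom) : Finset Var := q.foldr (fun F s => F.allVars ∪ s) ∅

/-- Self-join-free: pairwise distinct relation names. -/
def SelfJoinFree (q : List DBAtom) : Prop := (q.map DBAtom.rel).Nodup

def KeyEqual (f g : DBFact) : Prop := f.rel = g.rel ∧ f.keyArgs = g.keyArgs

def DBConsistent (s : Finset DBFact) : Prop :=
  ∀ f ∈ s, ∀ g ∈ s, KeyEqual f g → f = g

/-- A repair: an inclusion-maximal consistent subset. -/
def IsRepair (db r : Finset DBFact) : Prop :=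
  r ⊆ db ∧ DBConsistent r ∧
    ∀ s : Finset DBFact, r ⊆ s → s ⊆ db → DBConsistent s → s = r

/-! ## Valuations (partial maps from variables to constants) -/

abbrev Assignment : Type := Var → Option ℚ≥0

def Assignment.Dom (θ : Assignment) : Set Var := {v | θ v ≠ none}

def Assignment.ExtendsA (μ θ : Assignment) : Prop :=
  ∀ (v : Var) (c : ℚ≥0), θ v = some c → μ v = some c

noncomputable def Assignment.restrict (θ : Assignment) (S : Set Var) : Assignment :=
  fun v => if v ∈ S then θ v else none

def emptyAssignment : Assignment := fun _ => none

/-- Combination of two valuations (the first takes precedence). -/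
def Assignment.comb (θ μ : Assignment) : Assignment :=
  fun v => (θ v).orElse (fun _ => μ v)

def applyTrm (θ : Assignment) : Trm → Trm
  | .var v => (θ v).elim (Trm.var v) Trm.const
  | .const c => .const c

def applyAtom (θ : Assignment) (F : DBAtom) : DBAtom :=
  ⟨F.rel, F.keyArgs.map (applyTrm θ), F.nonkeyArgs.map (applyTrm θ)⟩

def applyQ (θ : Assignment) (q : List DBAtom) : List DBAtom := q.map (applyAtom θ)

def DBAtom.toFact? (F : DBAtom) : Option DBFact := do
  let ks ← F.keyArgs.mapM Trm.const?
  let ns ← F.nonkeyArgs.mapM Trm.const?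
  pure (DBFact.mk F.rel ks ns)

def AtomIn (s : Finset DBFact) (F : DBAtom) : Prop := ∃ f ∈ s, F.toFact? = some f

/-- `(s, θ) ⊨ q`: θ extends to a valuation over dom(θ) ∪ vars(q) mapping all atoms of q into s. -/
def Entails (s : Finset DBFact) (θ : Assignment) (q : List DBAtom) : Prop :=
  ∃ μ : Assignment, μ.Dom = θ.Dom ∪ ↑(qVars q) ∧ μ.ExtendsA θ ∧
    ∀ F ∈ q, AtomIn s (applyAtom μ F)

/-! ## Functional dependencies -/

def FDSatT (N : Set (Var → ℚ≥0)) (X Y : Finset Var) : Prop :=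
  ∀ t₁ ∈ N, ∀ t₂ ∈ N, (∀ x ∈ X, t₁ x = t₂ x) → ∀ y ∈ Y, t₁ y = t₂ y

/-- Standard logical implication of functional dependencies. -/
def FDImp (fds : Set (Finset Var × Finset Var)) (X Y : Finset Var) : Prop :=
  ∀ N : Set (Var → ℚ≥0), (∀ fd ∈ fds, FDSatT N fd.1 fd.2) → FDSatT N X Y

def FDSet (q : List DBAtom) : Set (Finset Var × Finset Var) :=
  {p | ∃ F ∈ q, p = (F.keyVars, F.allVars)}

def keycl (F : DBAtom) (q : List DBAtom) : Set Var :=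
  {x | x ∈ qVars q ∧ FDImp (FDSet (q.erase F)) F.keyVars {x}}

/-! ## Attacks and the attack graph -/

def AdjIn (q : List DBAtom) (a b : Var) : Prop :=
  ∃ G ∈ q, a ∈ G.allVars ∧ b ∈ G.allVars

/-- Atom F attacks variable x in q. -/
def AttacksVar (q : List DBAtom) (F : DBAtom) (x : Var) : Prop :=
  ∃ l : List Var, (∀ v ∈ l, v ∉ keycl F q) ∧
    (∃ h, l.head? = some h ∧ h ∈ F.notkeyVars) ∧
    l.getLast? = some x ∧ l.Chain' (AdjIn q)

def AttacksAtom (q : List DBAtom) (F G : DBAtom) : Prop :=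
  ∃ x ∈ G.allVars, AttacksVar q F x

def Unattacked (q : List DBAtom) (v : Var) : Prop := ∀ F ∈ q, ¬ AttacksVar q F v

/-- The list order of q is a topological sort of its (hence acyclic) attack graph. -/
def IsTopoSort (q : List DBAtom) : Prop :=
  ∀ i j : Fin q.length, q.get i ≠ q.get j →
    AttacksAtom q (q.get i) (q.get j) → (i : ℕ) < (j : ℕ)

/-! ## Embeddings and ∀embeddings (relative to the list order as topological sort) -/

def uVars (q : List DBAtom) (ℓ : ℕ) : Finset Var := qVars (q.take ℓ)

def headKey : List DBAtom → Finset Var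
  | [] => ∅
  | F :: _ => F.keyVars

/-- ℓ-embedding of q in db. -/
def IsLEmb (q : List DBAtom) (db : Finset DBFact) (ℓ : ℕ) (θ : Assignment) : Prop :=
  θ.Dom = ↑(uVars q ℓ) ∧ Entails db θ q

/-- ℓ-∀embedding of q in db. -/
def IsForallEmb (q : List DBAtom) (db : Finset DBFact) : ℕ → Assignment → Prop
  | 0, θ => IsLEmb q db 0 θ ∧ ∀ r, IsRepair db r → Entails r emptyAssignment q
  | (ℓ + 1), θ =>
      IsLEmb q db (ℓ + 1) θ ∧
      (∀ r, IsRepair db r →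
        Entails r (θ.restrict (↑(uVars q ℓ) ∪ ↑(headKey (q.drop ℓ)))) (q.drop ℓ)) ∧
      IsForallEmb q db ℓ (θ.restrict ↑(uVars q ℓ))

/-- An embedding of q in s: a valuation over vars(q) mapping all atoms of q into s. -/
def IsEmbedding (q : List DBAtom) (s : Finset DBFact) (θ : Assignment) : Prop :=
  θ.Dom = ↑(qVars q) ∧ ∀ F ∈ q, AtomIn s (applyAtom θ F)

/-- Superfrugal repair: every embedding of q in r is a ∀embedding of q in db. -/
def Superfrugal (q : List DBAtom) (db r : Finset DBFact) : Prop :=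
  IsRepair db r ∧ ∀ θ, IsEmbedding q r θ → IsForallEmb q db q.length θ

/-! ## FD satisfaction by sets of valuations; maximal consistent subsets (MCS) -/

def AgreeOn (θ₁ θ₂ : Assignment) (X : Finset Var) : Prop := ∀ x ∈ X, θ₁ x = θ₂ x

def SatFD (N : Set Assignment) (X Y : Finset Var) : Prop :=
  ∀ θ₁ ∈ N, ∀ θ₂ ∈ N, AgreeOn θ₁ θ₂ X → AgreeOn θ₁ θ₂ Y

def SatFDs (N : Set Assignment) (q : List DBAtom) : Prop :=
  ∀ fd ∈ FDSet q, SatFD N fd.1 fd.2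

/-- Maximal consistent subset of a set M of embeddings. -/
def IsMCS (q : List DBAtom) (M N : Set Assignment) : Prop :=
  N ⊆ M ∧ SatFDs N q ∧ ∀ N', N ⊆ N' → N' ⊆ M → SatFDs N' q → N' = N

/-! ## Aggregate operators -/

structure AggOp : Type where
  app : Multiset ℚ≥0 → ℚ
  nonneg : ∀ X : Multiset ℚ≥0, X ≠ 0 → 0 ≤ app X

noncomputable def AggOp.appNN (A : AggOp) (X : Multiset ℚ≥0) : ℚ≥0 := (A.app X).toNNRat

def AggOp.Assoc (A : AggOp) : Prop :=
  ∀ X Y : Multiset ℚ≥0, X ≠ 0 → A.app (X + Y) = A.app (A.appNN X ::ₘ Y)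

def AggOp.Mono (A : AggOp) : Prop :=
  ∀ x x' : List ℚ≥0, x ≠ [] → List.Forall₂ (· ≤ ·) x x' →
    ∀ Y : Multiset ℚ≥0, A.app ↑x ≤ A.app (↑x' + Y)

def evalTrm (θ : Assignment) : Trm → ℚ≥0
  | .var v => (θ v).getD 0
  | .const c => c

/-- The multiset of r-values over a (finite) set of valuations. -/
noncomputable def valsOf (N : Set Assignment) (r : Trm) : Multiset ℚ≥0 :=
  if h : N.Finite then h.toFinset.val.map (fun θ => evalTrm θ r) else 0

/-- Primitive numerical term: a (numerical) variable of the query, or a constant. -/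
def PrimTerm (q : List DBAtom) (r : Trm) : Prop :=
  (∃ v, r = Trm.var v ∧ v ∈ qVars q) ∨ (∃ c, r = Trm.const c)

/-! ## Branches and ∀key-embeddings -/

/-- γ is a branch of the ℓ-∀embedding θ. -/
def IsBranch (q : List DBAtom) (db : Finset DBFact) (ℓ : ℕ) (θ γ : Assignment) : Prop :=
  γ.ExtendsA θ ∧
  (∀ v ∈ γ.Dom \ θ.Dom, Unattacked (applyQ θ (q.drop ℓ)) v) ∧
  (∃ μ, IsForallEmb q db q.length μ ∧ μ.ExtendsA γ)

/-- γ is an (ℓ+1)-∀key-embedding: a branch of θ with domain dom(θ) ∪ key(F_{ℓ+1}). -/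
def IsKeyEmb (q : List DBAtom) (db : Finset DBFact) (ℓ : ℕ) (θ γ : Assignment) : Prop :=
  IsBranch q db ℓ θ γ ∧ γ.Dom = θ.Dom ∪ ↑(headKey (q.drop ℓ))

/-- M(θ): all ∀embeddings of q in db extending θ. -/
def Mset (q : List DBAtom) (db : Finset DBFact) (θ : Assignment) : Set Assignment :=
  {μ | IsForallEmb q db q.length μ ∧ μ.ExtendsA θ}

/-! ## Weakly connected components of the attack graph -/

def UndirectedEdge (p : List DBAtom) (F G : DBAtom) : Prop :=
  F ∈ p ∧ G ∈ p ∧ (AttacksAtom p F G ∨ AttacksAtom p G F)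

/-- S is a maximal weakly connected component of the attack graph of p. -/
def IsWCC (p : List DBAtom) (S : Set DBAtom) : Prop :=
  ∃ F₀ ∈ p, S = {G | Relation.ReflTransGen (UndirectedEdge p) F₀ G}

/-! ## rifi, sequential proofs, n-minimality -/

/-- rifi(q, s, V): valuations over V extending to a valuation over vars(q) mapping q into s. -/
def rifi (q : List DBAtom) (s : Finset DBFact) (V : Finset Var) : Set Assignment :=
  {θ | θ.Dom = ↑V ∧ ∃ μ : Assignment, μ.Dom = ↑(qVars q) ∧ μ.ExtendsA θ ∧
      ∀ F ∈ q, AtomIn s (applyAtom μ F)}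

/-- A sequential proof of FD(p) ⊨ Z → w. -/
def IsSeqProof (p : List DBAtom) (Z : Finset Var) (w : Var) (l : List DBAtom) : Prop :=
  (∀ F ∈ l, F ∈ p) ∧
  (∀ i : Fin l.length, (l.get i).keyVars ⊆ Z ∪ qVars (l.take i.1)) ∧
  w ∈ Z ∪ qVars l

/-- n-minimal repair (with X = vars(q)). -/
def NMinimal (q : List DBAtom) (db r : Finset DBFact) : Prop :=
  IsRepair db r ∧
  ¬ ∃ s : Finset DBFact, IsRepair db s ∧
      (∀ θ, IsEmbedding q s θ → IsEmbedding q r θ) ∧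
      (∃ μ, IsEmbedding q r μ ∧ ¬ IsEmbedding q s μ)

/-! ## Descending chains for aggregate operators -/

def DescChain {α β : Type*} [LT β] (F : Multiset α → β) (s t : α) : Prop :=
  ∀ i : ℕ, F (s ::ₘ Multiset.replicate (i + 1) t) < F (s ::ₘ Multiset.replicate i t)

def BoundedBy {α β : Type*} [LT β] (F : Multiset α → β) (s t : α) (m : ℕ → α) : Prop :=
  ∀ i j : ℕ, 1 ≤ j → ∀ k' k : ℕ, k' ≤ k → k ≤ i →
    F (s ::ₘ Multiset.replicate k' t) <
      F (Multiset.replicate j (m i) + (s ::ₘ Multiset.replicate k t))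

def HasBoundedDescChain {α β : Type*} [LT β] (F : Multiset α → β) : Prop :=
  ∃ s t, DescChain F s t ∧ ∃ m : ℕ → α, BoundedBy F s t m

/-! ### Auxiliary development for stmt0 -/

section Aux

open List

/-! #### Term/variable plumbing -/

lemma Trm.var?_eq_some_iff {t : Trm} {x : Var} : t.var? = some x ↔ t = .var x := by
  cases t <;> simp [Trm.var?]

lemma mem_keyVars_iff {F : DBAtom} {x : Var} :
    x ∈ F.keyVars ↔ Trm.var x ∈ F.keyArgs := by
  simp only [DBAtom.keyVars, List.mem_toFinset, List.mem_filterMap]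
  constructor
  · rintro ⟨t, ht, h⟩; rwa [Trm.var?_eq_some_iff.1 h] at ht
  · intro h; exact ⟨_, h, rfl⟩

lemma mem_allVars_iff {F : DBAtom} {x : Var} :
    x ∈ F.allVars ↔ Trm.var x ∈ F.keyArgs ∨ Trm.var x ∈ F.nonkeyArgs := by
  simp only [DBAtom.allVars, List.mem_toFinset, List.mem_filterMap, List.mem_append]
  constructor
  · rintro ⟨t, ht, h⟩; rwa [Trm.var?_eq_some_iff.1 h] at ht
  · intro h; exact ⟨_, h, rfl⟩

lemma keyVars_subset_allVars (F : DBAtom) : F.keyVars ⊆ F.allVars := by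
  intro x hx
  exact mem_allVars_iff.2 (Or.inl (mem_keyVars_iff.1 hx))

lemma mem_notkeyVars_iff {F : DBAtom} {x : Var} :
    x ∈ F.notkeyVars ↔ x ∈ F.allVars ∧ x ∉ F.keyVars := by
  simp [DBAtom.notkeyVars]

/-! #### qVars -/

@[simp] lemma qVars_nil : qVars [] = ∅ := rfl

@[simp] lemma qVars_cons (F : DBAtom) (l : List DBAtom) :
    qVars (F :: l) = F.allVars ∪ qVars l := rfl

lemma qVars_append (l₁ l₂ : List DBAtom) :
    qVars (l₁ ++ l₂) = qVars l₁ ∪ qVars l₂ := by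
  induction l₁ with
  | nil => simp
  | cons F t ih => simp [ih, Finset.union_assoc]

lemma mem_qVars_iff {q : List DBAtom} {x : Var} :
    x ∈ qVars q ↔ ∃ F ∈ q, x ∈ F.allVars := by
  induction q with
  | nil => simp
  | cons F t ih => simp [ih, Finset.mem_union]

lemma qVars_perm {q q' : List DBAtom} (h : q.Perm q') : qVars q = qVars q' := by
  ext x
  simp only [mem_qVars_iff]
  exact ⟨fun ⟨F, hF, hx⟩ => ⟨F, h.mem_iff.1 hF, hx⟩,
    fun ⟨F, hF, hx⟩ => ⟨F, h.mem_iff.2 hF, hx⟩⟩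

lemma allVars_subset_qVars {q : List DBAtom} {F : DBAtom} (h : F ∈ q) :
    F.allVars ⊆ qVars q := fun x hx => mem_qVars_iff.2 ⟨F, h, hx⟩

/-! #### Assignment plumbing -/

lemma Assignment.mem_dom_iff {θ : Assignment} {v : Var} :
    v ∈ θ.Dom ↔ ∃ c, θ v = some c := by
  simp [Assignment.Dom, Option.ne_none_iff_exists']

lemma Assignment.not_mem_dom {θ : Assignment} {v : Var} (h : v ∉ θ.Dom) : θ v = none := by
  by_contra hc; exact h hc

@[simp] lemma restrict_dom (θ : Assignment) (S : Set Var) :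
    (θ.restrict S).Dom = θ.Dom ∩ S := by
  ext v
  by_cases h : v ∈ S <;> simp [Assignment.restrict, Assignment.Dom, h]

lemma restrict_restrict (θ : Assignment) (S T : Set Var) :
    (θ.restrict S).restrict T = θ.restrict (S ∩ T) := by
  funext v
  by_cases hS : v ∈ S <;> by_cases hT : v ∈ T <;>
    simp [Assignment.restrict, hS, hT]

lemma restrict_eq_self {θ : Assignment} {S : Set Var} (h : θ.Dom ⊆ S) :
    θ.restrict S = θ := by
  funext v
  by_cases hv : v ∈ S
  · simp [Assignment.restrict, hv]
  · simp only [Assignment.restrict, hv, if_false]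
    exact (Assignment.not_mem_dom (fun hd => hv (h hd))).symm

lemma restrict_apply_of_mem {θ : Assignment} {S : Set Var} {v : Var} (h : v ∈ S) :
    θ.restrict S v = θ v := by simp [Assignment.restrict, h]

lemma extendsA_restrict (θ : Assignment) (S : Set Var) :
    θ.ExtendsA (θ.restrict S) := by
  intro v c h
  by_cases hv : v ∈ S
  · rwa [restrict_apply_of_mem hv] at h
  · simp [Assignment.restrict, hv] at h

/-- From a witness extending a restriction of `θ`, recover `θ`'s value. -/
lemma ext_restrict_val {μ θ : Assignment} {S : Set Var} {x : Var}
    (hext : μ.ExtendsA (θ.restrict S)) (hxS : x ∈ S) (hxD : x ∈ θ.Dom) :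
    μ x = θ x := by
  obtain ⟨c, hc⟩ := Assignment.mem_dom_iff.1 hxD
  rw [hc]
  exact hext x c (by rw [restrict_apply_of_mem hxS]; exact hc)

end Aux
section Aux2

open List

/-- mapM of `Trm.const?` over applied terms, when all variables are defined. -/
lemma mapM'_const?_applyTrm {μ : Assignment} :
    ∀ (l : List Trm), (∀ v, Trm.var v ∈ l → μ v ≠ none) →
      (l.map (applyTrm μ)).mapM' Trm.const? = some (l.map (evalTrm μ)) := by
  intro l
  induction l with
  | nil => intro _; rfl
  | cons t ts ih =>
    intro hdef
    have hts := ih (fun v hv => hdef v (List.mem_cons_of_mem _ hv))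
    have hhd : (applyTrm μ t).const? = some (evalTrm μ t) := by
      cases t with
      | const c => rfl
      | var v =>
        have := hdef v (List.mem_cons_self)
        obtain ⟨c, hc⟩ := Option.ne_none_iff_exists'.1 this
        simp [applyTrm, evalTrm, hc, Trm.const?]
    rw [List.map_cons, List.mapM'_cons, hhd, hts]
    rfl

lemma mapM_const?_applyTrm {μ : Assignment} (l : List Trm)
    (h : ∀ v, Trm.var v ∈ l → μ v ≠ none) :
    (l.map (applyTrm μ)).mapM Trm.const? = some (l.map (evalTrm μ)) := by
  rw [← List.mapM'_eq_mapM]; exact mapM'_const?_applyTrm l h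

lemma mapM'_const?_applyTrm_inv {μ : Assignment} :
    ∀ (l : List Trm) (L : List ℚ≥0),
      (l.map (applyTrm μ)).mapM' Trm.const? = some L →
      (∀ v, Trm.var v ∈ l → μ v ≠ none) ∧ L = l.map (evalTrm μ) := by
  intro l
  induction l with
  | nil => intro L h; simp [List.mapM'] at h; simp [← h]
  | cons t ts ih =>
    intro L h
    simp only [List.map_cons, List.mapM'_cons, Option.bind_eq_bind, Option.bind_eq_some_iff] at h
    obtain ⟨c, hc, L', hL', hpure⟩ := h
    have hLeq : L = c :: L' := by
      simpa [pure, Option.some.injEq] using hpure.symm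
    obtain ⟨hdef, rfl⟩ := ih L' hL'
    subst hLeq
    constructor
    · intro v hv
      rcases List.mem_cons.1 hv with h | h
      · subst h
        intro hnone
        simp [applyTrm, hnone, Trm.const?] at hc
      · exact hdef v h
    · cases t with
      | const c' => simp [applyTrm, Trm.const?] at hc; simp [evalTrm, ← hc]
      | var v =>
        cases hv : μ v with
        | none => simp [applyTrm, hv, Trm.const?] at hc
        | some c' =>
          simp [applyTrm, hv, Trm.const?] at hc
          simp [evalTrm, hv, ← hc]

lemma mapM_const?_applyTrm_inv {μ : Assignment} (l : List Trm) (L : List ℚ≥0)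
    (h : (l.map (applyTrm μ)).mapM Trm.const? = some L) :
    (∀ v, Trm.var v ∈ l → μ v ≠ none) ∧ L = l.map (evalTrm μ) := by
  rw [← List.mapM'_eq_mapM] at h; exact mapM'_const?_applyTrm_inv l L h

/-- The ground fact of an atom under a (total enough) assignment. -/
def factOf (μ : Assignment) (H : DBAtom) : DBFact :=
  ⟨H.rel, H.keyArgs.map (evalTrm μ), H.nonkeyArgs.map (evalTrm μ)⟩

lemma toFact?_applyAtom {μ : Assignment} {H : DBAtom}
    (hdef : ∀ x ∈ H.allVars, μ x ≠ none) :
    (applyAtom μ H).toFact? = some (factOf μ H) := by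
  have hk : ∀ v, Trm.var v ∈ H.keyArgs → μ v ≠ none := fun v hv =>
    hdef v (mem_allVars_iff.2 (Or.inl hv))
  have hn : ∀ v, Trm.var v ∈ H.nonkeyArgs → μ v ≠ none := fun v hv =>
    hdef v (mem_allVars_iff.2 (Or.inr hv))
  simp only [DBAtom.toFact?, applyAtom]
  rw [mapM_const?_applyTrm _ hk, mapM_const?_applyTrm _ hn]
  rfl

lemma toFact?_applyAtom_inv {μ : Assignment} {H : DBAtom} {f : DBFact}
    (h : (applyAtom μ H).toFact? = some f) :
    (∀ x ∈ H.allVars, μ x ≠ none) ∧ f = factOf μ H := by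
  simp only [DBAtom.toFact?, applyAtom, Option.bind_eq_bind, Option.bind_eq_some_iff] at h
  obtain ⟨ks, hks, h⟩ := h
  obtain ⟨ns, hns, hf⟩ := h
  replace hf : _ = f := Option.some.inj hf
  obtain ⟨hdk, rfl⟩ := mapM_const?_applyTrm_inv _ _ hks
  obtain ⟨hdn, rfl⟩ := mapM_const?_applyTrm_inv _ _ hns
  refine ⟨?_, by simp [factOf, ← hf]⟩
  intro x hx
  rcases mem_allVars_iff.1 hx with h | h
  · exact hdk x h
  · exact hdn x h

lemma AtomIn_iff {s : Finset DBFact} {μ : Assignment} {H : DBAtom} :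
    AtomIn s (applyAtom μ H) ↔ (∀ x ∈ H.allVars, μ x ≠ none) ∧ factOf μ H ∈ s := by
  constructor
  · rintro ⟨f, hf, hfact⟩
    obtain ⟨hdef, rfl⟩ := toFact?_applyAtom_inv hfact
    exact ⟨hdef, hf⟩
  · rintro ⟨hdef, hmem⟩
    exact ⟨_, hmem, toFact?_applyAtom hdef⟩

lemma factOf_congr {α β : Assignment} {H : DBAtom}
    (h : ∀ x ∈ H.allVars, α x = β x) : factOf α H = factOf β H := by
  have hA : ∀ t ∈ H.keyArgs, evalTrm α t = evalTrm β t := by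
    intro t ht
    cases t with
    | const c => rfl
    | var v => simp [evalTrm, h v (mem_allVars_iff.2 (Or.inl ht))]
  have hB : ∀ t ∈ H.nonkeyArgs, evalTrm α t = evalTrm β t := by
    intro t ht
    cases t with
    | const c => rfl
    | var v => simp [evalTrm, h v (mem_allVars_iff.2 (Or.inr ht))]
  simp [factOf, List.map_eq_map_iff.2 hA, List.map_eq_map_iff.2 hB]

/-- Two satisfied instantiations of one atom in a consistent set that agree on the key
agree on all variables. -/
lemma fact_agree {s : Finset DBFact} (hcons : DBConsistent s)
    {α β : Assignment} {H : DBAtom}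
    (hα : AtomIn s (applyAtom α H)) (hβ : AtomIn s (applyAtom β H))
    (hkey : ∀ x ∈ H.keyVars, α x = β x) :
    ∀ x ∈ H.allVars, α x = β x := by
  obtain ⟨hdefα, hmemα⟩ := AtomIn_iff.1 hα
  obtain ⟨hdefβ, hmemβ⟩ := AtomIn_iff.1 hβ
  have hke : KeyEqual (factOf α H) (factOf β H) := by
    refine ⟨rfl, ?_⟩
    simp only [factOf]
    refine List.map_eq_map_iff.2 ?_
    intro t ht
    cases t with
    | const c => rfl
    | var v => simp [evalTrm, hkey v (mem_keyVars_iff.2 ht)]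
  have heq := hcons _ hmemα _ hmemβ hke
  have hkeys : H.keyArgs.map (evalTrm α) = H.keyArgs.map (evalTrm β) :=
    congrArg DBFact.keyArgs heq
  have hnons : H.nonkeyArgs.map (evalTrm α) = H.nonkeyArgs.map (evalTrm β) :=
    congrArg DBFact.nonkeyArgs heq
  intro x hx
  have hval : evalTrm α (Trm.var x) = evalTrm β (Trm.var x) := by
    rcases mem_allVars_iff.1 hx with h | h
    · exact List.map_eq_map_iff.1 hkeys _ h
    · exact List.map_eq_map_iff.1 hnons _ h
  obtain ⟨a, ha⟩ := Option.ne_none_iff_exists'.1 (hdefα x hx)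
  obtain ⟨b, hb⟩ := Option.ne_none_iff_exists'.1 (hdefβ x hx)
  simp only [evalTrm, ha, hb, Option.getD_some] at hval
  rw [ha, hb, hval]

end Aux2
section Aux3

open List

/-! #### Entails manipulation -/

lemma applyAtom_congr {α β : Assignment} {H : DBAtom}
    (h : ∀ x ∈ H.allVars, α x = β x) : applyAtom α H = applyAtom β H := by
  have : ∀ l : List Trm, (∀ v, Trm.var v ∈ l → α v = β v) →
      l.map (applyTrm α) = l.map (applyTrm β) := by
    intro l hl
    refine List.map_eq_map_iff.2 ?_
    intro t ht
    cases t with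
    | const c => rfl
    | var v => simp [applyTrm, hl v ht]
  simp only [applyAtom]
  rw [this _ (fun v hv => h v (mem_allVars_iff.2 (Or.inl hv))),
    this _ (fun v hv => h v (mem_allVars_iff.2 (Or.inr hv)))]

/-- Build an `Entails` from a witness defined on a large-enough set. -/
lemma Entails.intro' {s : Finset DBFact} {σ : Assignment} {q : List DBAtom}
    (μ : Assignment)
    (hdom : σ.Dom ∪ ↑(qVars q) ⊆ μ.Dom)
    (hext : μ.ExtendsA σ)
    (hsat : ∀ F ∈ q, AtomIn s (applyAtom μ F)) :
    Entails s σ q := by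
  refine ⟨μ.restrict (σ.Dom ∪ ↑(qVars q)), ?_, ?_, ?_⟩
  · rw [restrict_dom]
    exact Set.inter_eq_right.2 hdom
  · intro v c hv
    have hvD : v ∈ σ.Dom := by simp [Assignment.Dom, hv]
    rw [restrict_apply_of_mem (Or.inl hvD)]
    exact hext v c hv
  · intro F hF
    have : applyAtom (μ.restrict (σ.Dom ∪ ↑(qVars q))) F = applyAtom μ F := by
      refine applyAtom_congr ?_
      intro x hx
      exact restrict_apply_of_mem (Or.inr (allVars_subset_qVars hF hx))
    rw [this]
    exact hsat F hF

lemma Entails.perm {s : Finset DBFact} {σ : Assignment} {q q' : List DBAtom}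
    (hp : q.Perm q') (h : Entails s σ q) : Entails s σ q' := by
  obtain ⟨μ, hdom, hext, hsat⟩ := h
  refine ⟨μ, ?_, hext, fun F hF => hsat F (hp.mem_iff.2 hF)⟩
  rw [hdom, qVars_perm hp]

/-- Weakening: a more-restricted assignment still entails. -/
lemma Entails.of_restrict {s : Finset DBFact} {θ : Assignment} {q : List DBAtom}
    (S : Set Var) (h : Entails s θ q) : Entails s (θ.restrict S) q := by
  obtain ⟨μ, hdom, hext, hsat⟩ := h
  refine Entails.intro' μ ?_ ?_ hsat
  · rw [hdom, restrict_dom]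
    exact Set.union_subset_union_left _ (Set.inter_subset_left)
  · intro v c hv
    by_cases hvS : v ∈ S
    · rw [restrict_apply_of_mem hvS] at hv
      exact hext v c hv
    · simp [Assignment.restrict, hvS] at hv

/-! #### KeyEqual and repairs -/

lemma KeyEqual.refl (f : DBFact) : KeyEqual f f := ⟨rfl, rfl⟩

lemma KeyEqual.symm' {f g : DBFact} (h : KeyEqual f g) : KeyEqual g f :=
  ⟨h.1.symm, h.2.symm⟩

lemma KeyEqual.trans' {f g k : DBFact} (h : KeyEqual f g) (h' : KeyEqual g k) :
    KeyEqual f k := ⟨h.1.trans h'.1, h.2.trans h'.2⟩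

/-- Surgery on a repair: replace the block of `f0` by `f0` itself. -/
lemma repair_surgery {db r : Finset DBFact} (hr : IsRepair db r) {f0 : DBFact}
    (hf0 : f0 ∈ db) :
    ∃ r' : Finset DBFact, IsRepair db r' ∧ f0 ∈ r' ∧
      ∀ g ∈ r', g ≠ f0 → g ∈ r := by
  classical
  obtain ⟨hsub, hcons, hmax⟩ := hr
  refine ⟨insert f0 (r.filter fun g => ¬ KeyEqual g f0), ⟨?_, ?_, ?_⟩, ?_, ?_⟩
  · intro g hg
    rcases Finset.mem_insert.1 hg with h | h
    · exact h ▸ hf0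
    · exact hsub (Finset.mem_filter.1 h).1
  · intro f hf g hg hke
    rcases Finset.mem_insert.1 hf with h1 | h1 <;>
      rcases Finset.mem_insert.1 hg with h2 | h2
    · rw [h1, h2]
    · exact absurd ((h1 ▸ hke).symm') (Finset.mem_filter.1 h2).2
    · exact absurd (h2 ▸ hke) (Finset.mem_filter.1 h1).2
    · exact hcons _ (Finset.mem_filter.1 h1).1 _ (Finset.mem_filter.1 h2).1 hke
  · -- maximality
    intro s hrs hsdb hscons
    apply Finset.Subset.antisymm _ hrs
    intro f hf
    by_cases hkf : KeyEqual f f0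
    · have : f = f0 := hscons _ hf _ (hrs (Finset.mem_insert_self _ _)) hkf
      exact this ▸ Finset.mem_insert_self _ _
    · -- f not key-equal to f0; show f ∈ r
      have hfr : f ∈ r := by
        by_contra hfr
        -- r ∪ {f} would be consistent
        have hcons' : DBConsistent (insert f r) := by
          intro a ha b hb hke
          rcases Finset.mem_insert.1 ha with h1 | h1 <;>
            rcases Finset.mem_insert.1 hb with h2 | h2
          · rw [h1, h2]
          · -- a = f, b ∈ r
            subst h1
            by_cases hbk : KeyEqual b f0
            · exact absurd (hke.trans' hbk) hkf
            · have hbr' : b ∈ insert f0 (r.filter fun g => ¬ KeyEqual g f0) :=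
                Finset.mem_insert_of_mem (Finset.mem_filter.2 ⟨h2, hbk⟩)
              exact hscons _ hf _ (hrs hbr') hke
          · subst h2
            by_cases hak : KeyEqual a f0
            · exact absurd (hke.symm'.trans' hak) hkf
            · have har' : a ∈ insert f0 (r.filter fun g => ¬ KeyEqual g f0) :=
                Finset.mem_insert_of_mem (Finset.mem_filter.2 ⟨h1, hak⟩)
              exact (hscons _ hf _ (hrs har') hke.symm').symm
          · exact hcons _ h1 _ h2 hke
        have := hmax (insert f r) (Finset.subset_insert _ _)
          (Finset.insert_subset (hsdb hf) hsub) hcons'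
        exact hfr (this ▸ Finset.mem_insert_self f r)
      exact Finset.mem_insert_of_mem (Finset.mem_filter.2 ⟨hfr, hkf⟩)
  · exact Finset.mem_insert_self _ _
  · intro g hg hne
    rcases Finset.mem_insert.1 hg with h | h
    · exact absurd h hne
    · exact (Finset.mem_filter.1 h).1

lemma rel_factOf (μ : Assignment) (H : DBAtom) : (factOf μ H).rel = H.rel := rfl

end Aux3
section Aux4

open List

/-! #### Syntactic FD closure -/

inductive FDcl (p : List DBAtom) (X : Finset Var) : Var → Prop
  | base {x : Var} : x ∈ X → FDcl p X x
  | step {H : DBAtom} {x : Var} : H ∈ p → (∀ y ∈ H.keyVars, FDcl p X y) →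
      x ∈ H.allVars → FDcl p X x

/-- Completeness: semantic FD implication yields syntactic closure membership. -/
lemma FDcl_of_FDImp {p : List DBAtom} {X : Finset Var} {x : Var}
    (h : FDImp (FDSet p) X {x}) : FDcl p X x := by
  classical
  set t₁ : Var → ℚ≥0 := fun _ => 0 with ht₁
  set t₂ : Var → ℚ≥0 := fun v => if FDcl p X v then 0 else 1 with ht₂
  set N : Set (Var → ℚ≥0) := {t₁, t₂} with hN
  have hsat : ∀ fd ∈ FDSet p, FDSatT N fd.1 fd.2 := by
    rintro ⟨K, V⟩ ⟨H, hH, hfd⟩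
    obtain ⟨hK, hV⟩ : K = H.keyVars ∧ V = H.allVars := by
      injection hfd with h1 h2; exact ⟨by simp [h1], by simp [h2]⟩
    subst hK; subst hV
    intro a ha b hb hagr y hy
    have key_forces : (∀ z ∈ H.keyVars, t₁ z = t₂ z) ∨ a = b := by
      rcases ha with ha | ha <;> rcases hb with hb | hb
      · exact Or.inr (ha.trans hb.symm)
      · subst ha; subst hb
        exact Or.inl hagr
      · subst ha; subst hb
        exact Or.inl (fun z hz => (hagr z hz).symm)
      · exact Or.inr (ha.trans hb.symm)
    rcases key_forces with hkeys | rfl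
    · -- all key vars are in the closure
      have hallcl : ∀ z ∈ H.keyVars, FDcl p X z := by
        intro z hz
        have := hkeys z hz
        simp only [ht₁, ht₂] at this
        by_contra hc
        rw [if_neg hc] at this
        exact one_ne_zero this.symm
      have hycl : FDcl p X y := FDcl.step hH hallcl hy
      have h2y : t₂ y = 0 := by simp [ht₂, hycl]
      have h1y : t₁ y = 0 := rfl
      rcases ha with ha | ha <;> rcases hb with hb | hb <;> subst ha <;> subst hb <;>
        simp [h1y, h2y]
    · rfl
  have := h N hsat t₁ (Or.inl rfl) t₂ (Or.inr rfl)
    (fun z hz => by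
      have hzcl : FDcl p X z := FDcl.base hz
      simp [ht₁, ht₂, hzcl]) x (Finset.mem_singleton_self x)
  simp only [ht₁, ht₂] at this
  by_contra hc
  rw [if_neg hc] at this
  exact one_ne_zero this.symm

/-- Induction principle: any set closed under the FDs of `p` and containing `X`
contains the closure. -/
lemma FDcl_subset {p : List DBAtom} {X : Finset Var} {S : Set Var}
    (hX : ∀ x ∈ X, x ∈ S)
    (hstep : ∀ H ∈ p, (∀ y ∈ H.keyVars, y ∈ S) → ∀ x ∈ H.allVars, x ∈ S) :
    ∀ x, FDcl p X x → x ∈ S := by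
  intro x hx
  induction hx with
  | base h => exact hX _ h
  | step hH _ hxH ih => exact hstep _ hH ih _ hxH

/-! #### keycl -/

lemma mem_keycl_of_key {F : DBAtom} {q : List DBAtom} (hF : F ∈ q) {x : Var}
    (hx : x ∈ F.keyVars) : x ∈ keycl F q := by
  refine ⟨allVars_subset_qVars hF (keyVars_subset_allVars F hx), ?_⟩
  intro N _ t₁ h₁ t₂ h₂ hagr y hy
  rw [Finset.mem_singleton.1 hy]
  exact hagr x hx

lemma keycl_to_FDcl {F : DBAtom} {q : List DBAtom} {x : Var}
    (h : x ∈ keycl F q) : FDcl (q.erase F) F.keyVars x :=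
  FDcl_of_FDImp h.2

/-! #### Attack paths -/

/-- A non-key variable outside the closure is attacked (path of length 1). -/
lemma attacksVar_of_notkey {q : List DBAtom} {F : DBAtom} {x : Var}
    (hx : x ∈ F.notkeyVars) (hcl : x ∉ keycl F q) : AttacksVar q F x := by
  exact ⟨[x], by simpa using hcl, ⟨x, rfl, hx⟩, rfl, List.isChain_singleton x⟩

/-- Extend an attack path by one adjacent variable. -/
lemma attacksVar_extend {q : List DBAtom} {F H : DBAtom} {z x : Var}
    (hz : AttacksVar q F z) (hH : H ∈ q) (hzH : z ∈ H.allVars) (hxH : x ∈ H.allVars)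
    (hcl : x ∉ keycl F q) : AttacksVar q F x := by
  obtain ⟨l, hnotcl, ⟨hd, hhd, hhdnk⟩, hlast, hchain⟩ := hz
  refine ⟨l ++ [x], ?_, ⟨hd, ?_, hhdnk⟩, ?_, ?_⟩
  · intro v hv
    rcases List.mem_append.1 hv with h | h
    · exact hnotcl v h
    · rw [List.mem_singleton.1 h]; exact hcl
  · cases l with
    | nil => simp at hhd
    | cons a t => simpa using hhd
  · simp
  · show List.IsChain (AdjIn q) (l ++ [x])
    rw [List.isChain_append]
    refine ⟨hchain, List.isChain_singleton x, ?_⟩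
    intro a ha b hb
    have hb' : b = x := by have h : x = b := by simpa using hb
                           exact h.symm
    have ha' : a = z := by rw [hlast] at ha
                           have h : z = a := by simpa using ha
                           exact h.symm
    subst hb'; subst ha'
    exact ⟨H, hH, hzH, hxH⟩

/-- An unattacked variable of `F` is in the key closure. -/
lemma mem_keycl_of_not_attacked {q : List DBAtom} {F : DBAtom} (hF : F ∈ q) {x : Var}
    (hx : x ∈ F.allVars) (hatt : ¬ AttacksVar q F x) : x ∈ keycl F q := by
  by_cases hk : x ∈ F.keyVars
  · exact mem_keycl_of_key hF hk
  · by_contra hcl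
    exact hatt (attacksVar_of_notkey (mem_notkeyVars_iff.2 ⟨hx, hk⟩) hcl)

/-- Variables of an atom touching the attacked zone are attacked or in the closure. -/
lemma attacked_or_keycl {q : List DBAtom} {F H : DBAtom} {z x : Var}
    (hz : AttacksVar q F z) (hH : H ∈ q) (hzH : z ∈ H.allVars) (hxH : x ∈ H.allVars) :
    AttacksVar q F x ∨ x ∈ keycl F q := by
  by_cases hcl : x ∈ keycl F q
  · exact Or.inr hcl
  · exact Or.inl (attacksVar_extend hz hH hzH hxH hcl)

end Aux4
section Aux5

open List

/-! #### Permutation invariance of attack notions -/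

lemma FDSet_perm {q q' : List DBAtom} (h : q.Perm q') : FDSet q = FDSet q' := by
  ext p
  simp only [FDSet, Set.mem_setOf_eq]
  exact ⟨fun ⟨F, hF, hp⟩ => ⟨F, h.mem_iff.1 hF, hp⟩,
    fun ⟨F, hF, hp⟩ => ⟨F, h.mem_iff.2 hF, hp⟩⟩

lemma keycl_perm {q q' : List DBAtom} (h : q.Perm q') (F : DBAtom) :
    keycl F q = keycl F q' := by
  unfold keycl
  rw [qVars_perm h, FDSet_perm (h.erase F)]

lemma AdjIn_perm {q q' : List DBAtom} (h : q.Perm q') (a b : Var) :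
    AdjIn q a b ↔ AdjIn q' a b := by
  unfold AdjIn
  exact ⟨fun ⟨G, hG, hx⟩ => ⟨G, h.mem_iff.1 hG, hx⟩,
    fun ⟨G, hG, hx⟩ => ⟨G, h.mem_iff.2 hG, hx⟩⟩

lemma attacksVar_perm {q q' : List DBAtom} (h : q.Perm q') (F : DBAtom) (x : Var) :
    AttacksVar q F x ↔ AttacksVar q' F x := by
  unfold AttacksVar
  rw [keycl_perm h]
  constructor <;>
  · rintro ⟨l, h1, h2, h3, h4⟩
    refine ⟨l, h1, h2, h3, ?_⟩
    exact List.IsChain.imp (fun a b hab => by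
      first
        | exact (AdjIn_perm h a b).1 hab
        | exact (AdjIn_perm h a b).2 hab) h4

lemma attacksAtom_perm {q q' : List DBAtom} (h : q.Perm q') (F G : DBAtom) :
    AttacksAtom q F G ↔ AttacksAtom q' F G := by
  unfold AttacksAtom
  simp only [attacksVar_perm h]

/-! #### Nodup atoms from self-join-freeness -/

lemma sjf_nodup {q : List DBAtom} (h : SelfJoinFree q) : q.Nodup :=
  List.Nodup.of_map _ h

lemma sjf_perm {q q' : List DBAtom} (hp : q.Perm q') (h : SelfJoinFree q) :
    SelfJoinFree q' := ((hp.map DBAtom.rel).nodup_iff).1 h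

lemma sjf_rel_ne {q : List DBAtom} (h : SelfJoinFree q) {c B : List DBAtom}
    {F H : DBAtom} (hq : q = c ++ F :: B) (hH : H ∈ c ∨ H ∈ B) : H.rel ≠ F.rel := by
  subst hq
  intro hrel
  unfold SelfJoinFree at h
  rw [List.map_append, List.map_cons] at h
  rcases hH with hH | hH
  · have h2 := (List.nodup_append.1 h).2.2
    exact h2 _ (List.mem_map_of_mem hH) _ List.mem_cons_self hrel
  · have h1 := (List.nodup_append.1 h).2.1
    rw [List.nodup_cons] at h1
    exact h1.1 (hrel ▸ List.mem_map_of_mem hH)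

/-- In a self-join-free query, erasing `F` from `c ++ F :: B` gives `c ++ B`. -/
lemma erase_middle {q : List DBAtom} (h : SelfJoinFree q) {c B : List DBAtom}
    {F : DBAtom} (hq : q = c ++ F :: B) : q.erase F = c ++ B := by
  have hFc : F ∉ c := by
    intro hF
    exact sjf_rel_ne h hq (Or.inl hF) rfl
  rw [hq, List.erase_append_right _ hFc, List.erase_cons_head]

/-! #### The key agreement lemma -/

/-- Two witnesses mapping the non-prefix atoms into the same consistent set, and
agreeing on the prefix variables and key of `F`, agree on the closure `keycl F q`. -/
lemma agree_on_keycl {q c B' : List DBAtom} {F : DBAtom} {s : Finset DBFact}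
    (hsjf : SelfJoinFree q) (hq : q = c ++ F :: B')
    (hcons : DBConsistent s) {α β : Assignment}
    (hpre : ∀ H ∈ c, ∀ x ∈ H.allVars, α x = β x)
    (hkey : ∀ x ∈ F.keyVars, α x = β x)
    (htail : ∀ H ∈ B', AtomIn s (applyAtom α H) ∧ AtomIn s (applyAtom β H)) :
    ∀ x ∈ keycl F q, α x = β x := by
  intro x hx
  have hcl := keycl_to_FDcl hx
  rw [erase_middle hsjf hq] at hcl
  refine FDcl_subset (S := {x | α x = β x}) hkey ?_ x hcl
  intro H hH hkeys y hy
  rcases List.mem_append.1 hH with hHc | hHB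
  · exact hpre H hHc y hy
  · exact fact_agree hcons (htail H hHB).1 (htail H hHB).2 hkeys y hy

end Aux5
section Aux6

open List

lemma attacksVar_not_keycl {q : List DBAtom} {F : DBAtom} {x : Var}
    (h : AttacksVar q F x) : x ∉ keycl F q := by
  obtain ⟨l, hnotcl, _, hlast, _⟩ := h
  have hx : x ∈ l := by
    cases l with
    | nil => simp at hlast
    | cons a t => exact List.mem_of_mem_getLast? (by rw [hlast]; rfl)
  exact hnotcl x hx

/-- `θ` itself realizes its atoms when its domain is the full variable set. -/
lemma entails_self {db : Finset DBFact} {θ : Assignment} {q : List DBAtom}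
    (hdom : θ.Dom = ↑(qVars q)) (h : Entails db θ q) :
    ∀ H ∈ q, AtomIn db (applyAtom θ H) := by
  obtain ⟨μ, hμdom, hμext, hμsat⟩ := h
  have hμθ : ∀ x ∈ qVars q, μ x = θ x := by
    intro x hx
    have hxd : x ∈ θ.Dom := by rw [hdom]; exact hx
    obtain ⟨cst, hc⟩ := Assignment.mem_dom_iff.1 hxd
    rw [hc]
    exact hμext x cst hc
  intro H hH
  have : applyAtom μ H = applyAtom θ H :=
    applyAtom_congr (fun x hx => hμθ x (allVars_subset_qVars hH hx))
  exact this ▸ hμsat H hH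

/-- **C1**: the first swapped condition. -/
lemma swap_C1 {q c B : List DBAtom} {F G : DBAtom} {r : Finset DBFact}
    {θ : Assignment}
    (hsjf : SelfJoinFree q) (hq : q = c ++ F :: G :: B)
    (hFG : ¬ AttacksAtom q F G)
    (hθ : θ.Dom = ↑(qVars q))
    (hcons : DBConsistent r)
    (h1 : Entails r (θ.restrict (↑(qVars c) ∪ ↑F.keyVars)) (F :: G :: B))
    (h2 : Entails r (θ.restrict ((↑(qVars c) ∪ ↑F.allVars) ∪ ↑G.keyVars)) (G :: B)) :
    Entails r (θ.restrict (↑(qVars c) ∪ ↑G.keyVars)) (G :: F :: B) := by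
  classical
  obtain ⟨ρ, hρdom, hρext, hρsat⟩ := h1
  obtain ⟨ν, hνdom, hνext, hνsat⟩ := h2
  have hFq : F ∈ q := by rw [hq]; simp
  have hGq : G ∈ q := by rw [hq]; simp
  have hBq : ∀ H ∈ B, H ∈ q := by intro H hH; rw [hq]; simp [hH]
  have hsubq : ∀ x ∈ qVars c, x ∈ qVars q := by
    intro x hx; rw [hq, qVars_append]; exact Finset.mem_union_left _ hx
  -- values of the witnesses on θ-fixed variables
  have hρθ : ∀ x, (x ∈ (↑(qVars c) : Set Var) ∪ ↑F.keyVars) → ρ x = θ x := by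
    intro x hx
    refine ext_restrict_val hρext hx ?_
    rw [hθ]
    rcases hx with hx | hx
    · exact hsubq x hx
    · exact allVars_subset_qVars hFq (keyVars_subset_allVars F hx)
  have hνθ : ∀ x, (x ∈ ((↑(qVars c) : Set Var) ∪ ↑F.allVars) ∪ ↑G.keyVars) → ν x = θ x := by
    intro x hx
    refine ext_restrict_val hνext hx ?_
    rw [hθ]
    rcases hx with (hx | hx) | hx
    · exact hsubq x hx
    · exact allVars_subset_qVars hFq hx
    · exact allVars_subset_qVars hGq (keyVars_subset_allVars G hx)
  -- the agreement lemma
  have hAGR : ∀ x ∈ keycl F q, ρ x = ν x := by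
    refine agree_on_keycl (B' := G :: B) hsjf hq hcons ?_ ?_ ?_
    · intro H hH x hx
      have hxc : x ∈ qVars c := mem_qVars_iff.2 ⟨H, hH, hx⟩
      rw [hρθ x (Or.inl hxc), hνθ x (Or.inl (Or.inl hxc))]
    · intro x hx
      rw [hρθ x (Or.inr hx), hνθ x (Or.inl (Or.inr (keyVars_subset_allVars F hx)))]
    · intro H hH
      exact ⟨hρsat H (List.mem_cons_of_mem F hH), hνsat H hH⟩
  -- the glued witness
  set μ : Assignment := fun v => if AttacksVar q F v then ρ v else ν v with hμ
  have hμρ : ∀ {x}, AttacksVar q F x → μ x = ρ x := by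
    intro x hx; simp [hμ, hx]
  have hμν : ∀ {x}, ¬ AttacksVar q F x → μ x = ν x := by
    intro x hx; simp [hμ, hx]
  -- no attacked variable is in G
  have hGZ : ∀ x ∈ G.allVars, ¬ AttacksVar q F x := by
    intro x hx hatt
    exact hFG ⟨x, hx, hatt⟩
  -- μ agrees with ρ on the variables of F
  have hμρF : ∀ x ∈ F.allVars, μ x = ρ x := by
    intro x hx
    by_cases hz : AttacksVar q F x
    · exact hμρ hz
    · rw [hμν hz]
      exact (hAGR x (mem_keycl_of_not_attacked hFq hx hz)).symm
  -- μ agrees with ρ on atoms touching the attacked zone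
  have hμρtouch : ∀ H ∈ q, ∀ z ∈ H.allVars, AttacksVar q F z →
      ∀ x ∈ H.allVars, μ x = ρ x := by
    intro H hH z hz hatt x hx
    by_cases hzx : AttacksVar q F x
    · exact hμρ hzx
    · rw [hμν hzx]
      rcases attacked_or_keycl hatt hH hz hx with h | h
      · exact absurd h hzx
      · exact (hAGR x h).symm
  refine Entails.intro' μ ?_ ?_ ?_
  · -- domain
    intro v hv
    rw [restrict_dom] at hv
    have hv' : (v ∈ θ.Dom ∧ (v ∈ qVars c ∨ v ∈ G.keyVars)) ∨
        (v ∈ G.allVars ∨ v ∈ F.allVars ∨ v ∈ qVars B) := by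
      rcases hv with ⟨hvθ, hvS⟩ | hvq
      · exact Or.inl ⟨hvθ, by simpa using hvS⟩
      · right
        have : v ∈ qVars (G :: F :: B) := by exact_mod_cast hvq
        simpa [qVars_cons, Finset.mem_union, or_assoc] using this
    show μ v ≠ none
    by_cases hz : AttacksVar q F v
    · rw [hμρ hz]
      have : v ∈ ρ.Dom := by
        rw [hρdom, restrict_dom]
        rcases hv' with ⟨hvθ, hvc | hvk⟩ | hvG | hvF | hvB
        · exact Or.inl ⟨hvθ, Or.inl hvc⟩
        · exact absurd hz (hGZ v (keyVars_subset_allVars G hvk))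
        · exact absurd hz (hGZ v hvG)
        · exact Or.inr (by simp [qVars_cons, hvF])
        · exact Or.inr (by simp [qVars_cons, hvB])
      exact this
    · rw [hμν hz]
      have : v ∈ ν.Dom := by
        rw [hνdom, restrict_dom]
        rcases hv' with ⟨hvθ, hvc | hvk⟩ | hvG | hvF | hvB
        · exact Or.inl ⟨hvθ, Or.inl (Or.inl hvc)⟩
        · exact Or.inl ⟨hvθ, Or.inr hvk⟩
        · exact Or.inr (by simp [qVars_cons, hvG])
        · refine Or.inl ⟨?_, Or.inl (Or.inr hvF)⟩
          rw [hθ]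
          exact_mod_cast allVars_subset_qVars hFq hvF
        · exact Or.inr (by simp [qVars_cons, hvB])
      exact this
  · -- extends the restricted assignment
    intro v cst hv
    have hvS : v ∈ (↑(qVars c) : Set Var) ∪ ↑G.keyVars := by
      by_contra hc
      simp [Assignment.restrict, hc] at hv
    rw [restrict_apply_of_mem hvS] at hv
    by_cases hz : AttacksVar q F v
    · rw [hμρ hz]
      rcases hvS with hvc | hvk
      · rw [hρθ v (Or.inl hvc)]; exact hv
      · exact absurd hz (hGZ v (keyVars_subset_allVars G hvk))
    · rw [hμν hz]
      rcases hvS with hvc | hvk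
      · rw [hνθ v (Or.inl (Or.inl hvc))]; exact hv
      · rw [hνθ v (Or.inr hvk)]; exact hv
  · -- satisfaction of all atoms
    intro H hH
    rcases List.mem_cons.1 hH with rfl | hH
    · -- G
      have : applyAtom μ H = applyAtom ν H :=
        applyAtom_congr (fun x hx => hμν (hGZ x hx))
      rw [this]
      exact hνsat H (List.mem_cons_self)
    rcases List.mem_cons.1 hH with rfl | hH
    · -- F
      have : applyAtom μ H = applyAtom ρ H := applyAtom_congr hμρF
      rw [this]
      exact hρsat H (List.mem_cons_self)
    · -- H ∈ B
      by_cases htouch : ∃ z ∈ H.allVars, AttacksVar q F z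
      · obtain ⟨z, hz, hatt⟩ := htouch
        have : applyAtom μ H = applyAtom ρ H :=
          applyAtom_congr (hμρtouch H (hBq H hH) z hz hatt)
        rw [this]
        exact hρsat H (by simp [hH])
      · push_neg at htouch
        have : applyAtom μ H = applyAtom ν H :=
          applyAtom_congr (fun x hx => hμν (htouch x hx))
        rw [this]
        exact hνsat H (by simp [hH])

end Aux6
section Aux7

open List

/-- **C2**: the second swapped condition, proved by repair surgery. -/
lemma swap_C2 {q c B : List DBAtom} {F G : DBAtom} {db r : Finset DBFact}
    {θ : Assignment}
    (hsjf : SelfJoinFree q) (hq : q = c ++ F :: G :: B)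
    (hFG : ¬ AttacksAtom q F G)
    (hθ : θ.Dom = ↑(qVars q))
    (hGdb : AtomIn db (applyAtom θ G))
    (hr : IsRepair db r)
    (h1 : ∀ r', IsRepair db r' →
      Entails r' (θ.restrict (↑(qVars c) ∪ ↑F.keyVars)) (F :: G :: B))
    (h2 : ∀ r', IsRepair db r' →
      Entails r' (θ.restrict ((↑(qVars c) ∪ ↑F.allVars) ∪ ↑G.keyVars)) (G :: B)) :
    Entails r (θ.restrict ((↑(qVars c) ∪ ↑G.allVars) ∪ ↑F.keyVars)) (F :: B) := by
  classical
  have hFq : F ∈ q := by rw [hq]; simp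
  have hGq : G ∈ q := by rw [hq]; simp
  have hBq : ∀ H ∈ B, H ∈ q := by intro H hH; rw [hq]; simp [hH]
  have hsubq : ∀ x ∈ qVars c, x ∈ qVars q := by
    intro x hx; rw [hq, qVars_append]; exact Finset.mem_union_left _ hx
  have hθdef : ∀ x ∈ G.allVars, θ x ≠ none := by
    intro x hx
    have : x ∈ θ.Dom := by
      rw [hθ]; exact_mod_cast allVars_subset_qVars hGq hx
    exact this
  -- the fact θ(G) and the surgered repair
  obtain ⟨hdefG, hmemG⟩ := AtomIn_iff.1 hGdb
  obtain ⟨r', hr', hθGr', htransfer⟩ := repair_surgery hr hmemG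
  have hcons' : DBConsistent r' := hr'.2.1
  obtain ⟨ρ, hρdom, hρext, hρsat⟩ := h1 r' hr'
  obtain ⟨ν, hνdom, hνext, hνsat⟩ := h2 r' hr'
  -- θ-values of the witnesses on fixed variables
  have hρθ : ∀ x, (x ∈ (↑(qVars c) : Set Var) ∪ ↑F.keyVars) → ρ x = θ x := by
    intro x hx
    refine ext_restrict_val hρext hx ?_
    rw [hθ]
    rcases hx with hx | hx
    · exact hsubq x hx
    · exact allVars_subset_qVars hFq (keyVars_subset_allVars F hx)
  have hνθ : ∀ x, (x ∈ ((↑(qVars c) : Set Var) ∪ ↑F.allVars) ∪ ↑G.keyVars) → ν x = θ x := by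
    intro x hx
    refine ext_restrict_val hνext hx ?_
    rw [hθ]
    rcases hx with (hx | hx) | hx
    · exact hsubq x hx
    · exact allVars_subset_qVars hFq hx
    · exact allVars_subset_qVars hGq (keyVars_subset_allVars G hx)
  -- ν agrees with θ on all variables of G (its block in r' is θ(G))
  have hνG : ∀ x ∈ G.allVars, ν x = θ x := by
    have hθG : AtomIn r' (applyAtom θ G) := AtomIn_iff.2 ⟨hdefG, hθGr'⟩
    refine fact_agree hcons' (hνsat G (List.mem_cons_self)) hθG ?_
    intro x hx
    exact hνθ x (Or.inr hx)
  -- agreement on the closure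
  have hAGR : ∀ x ∈ keycl F q, ρ x = ν x := by
    refine agree_on_keycl (B' := G :: B) hsjf hq hcons' ?_ ?_ ?_
    · intro H hH x hx
      have hxc : x ∈ qVars c := mem_qVars_iff.2 ⟨H, hH, hx⟩
      rw [hρθ x (Or.inl hxc), hνθ x (Or.inl (Or.inl hxc))]
    · intro x hx
      rw [hρθ x (Or.inr hx), hνθ x (Or.inl (Or.inr (keyVars_subset_allVars F hx)))]
    · intro H hH
      exact ⟨hρsat H (List.mem_cons_of_mem F hH), hνsat H hH⟩
  -- glued witness
  set μ : Assignment := fun v => if AttacksVar q F v then ρ v else ν v with hμ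
  have hμρ : ∀ {x}, AttacksVar q F x → μ x = ρ x := by
    intro x hx; simp [hμ, hx]
  have hμν : ∀ {x}, ¬ AttacksVar q F x → μ x = ν x := by
    intro x hx; simp [hμ, hx]
  have hGZ : ∀ x ∈ G.allVars, ¬ AttacksVar q F x := by
    intro x hx hatt
    exact hFG ⟨x, hx, hatt⟩
  have hμρF : ∀ x ∈ F.allVars, μ x = ρ x := by
    intro x hx
    by_cases hz : AttacksVar q F x
    · exact hμρ hz
    · rw [hμν hz]
      exact (hAGR x (mem_keycl_of_not_attacked hFq hx hz)).symm
  have hμρtouch : ∀ H ∈ q, ∀ z ∈ H.allVars, AttacksVar q F z →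
      ∀ x ∈ H.allVars, μ x = ρ x := by
    intro H hH z hz hatt x hx
    by_cases hzx : AttacksVar q F x
    · exact hμρ hzx
    · rw [hμν hzx]
      rcases attacked_or_keycl hatt hH hz hx with h | h
      · exact absurd h hzx
      · exact (hAGR x h).symm
  -- transfer from r' to r for non-G relations
  have htrans : ∀ (w : Assignment) (H : DBAtom), H.rel ≠ G.rel →
      AtomIn r' (applyAtom w H) → AtomIn r (applyAtom w H) := by
    intro w H hrel hin
    obtain ⟨hdef, hmem⟩ := AtomIn_iff.1 hin
    refine AtomIn_iff.2 ⟨hdef, ?_⟩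
    refine htransfer _ hmem ?_
    intro hcontra
    obtain ⟨_, hfG⟩ := AtomIn_iff.1 hGdb
    have : (factOf w H).rel = (factOf θ G).rel := by rw [hcontra]
    rw [rel_factOf, rel_factOf] at this
    exact hrel this
  have hq' : q = (c ++ [F]) ++ G :: B := by rw [hq]; simp
  have hFrel : F.rel ≠ G.rel := sjf_rel_ne hsjf hq' (Or.inl (by simp))
  have hBrel : ∀ H ∈ B, H.rel ≠ G.rel := fun H hH => sjf_rel_ne hsjf hq' (Or.inr hH)
  refine Entails.intro' μ ?_ ?_ ?_
  · -- domain
    intro v hv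
    rw [restrict_dom] at hv
    have hv' : (v ∈ θ.Dom ∧ (v ∈ qVars c ∨ v ∈ G.allVars ∨ v ∈ F.keyVars)) ∨
        (v ∈ F.allVars ∨ v ∈ qVars B) := by
      rcases hv with ⟨hvθ, hvS⟩ | hvq
      · exact Or.inl ⟨hvθ, by simpa [or_assoc] using hvS⟩
      · right
        have : v ∈ qVars (F :: B) := by exact_mod_cast hvq
        simpa [qVars_cons, Finset.mem_union] using this
    show μ v ≠ none
    by_cases hz : AttacksVar q F v
    · rw [hμρ hz]
      have : v ∈ ρ.Dom := by
        rw [hρdom, restrict_dom]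
        rcases hv' with ⟨hvθ, hvc | hvG | hvk⟩ | hvF | hvB
        · exact Or.inl ⟨hvθ, Or.inl hvc⟩
        · exact absurd hz (hGZ v hvG)
        · exact Or.inl ⟨hvθ, Or.inr hvk⟩
        · exact Or.inr (by simp [qVars_cons, hvF])
        · exact Or.inr (by simp [qVars_cons, hvB])
      exact this
    · rw [hμν hz]
      have : v ∈ ν.Dom := by
        rw [hνdom, restrict_dom]
        rcases hv' with ⟨hvθ, hvc | hvG | hvk⟩ | hvF | hvB
        · exact Or.inl ⟨hvθ, Or.inl (Or.inl hvc)⟩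
        · exact Or.inr (by simp [qVars_cons, hvG])
        · exact Or.inl ⟨hvθ, Or.inl (Or.inr (keyVars_subset_allVars F hvk))⟩
        · refine Or.inl ⟨?_, Or.inl (Or.inr hvF)⟩
          rw [hθ]
          exact_mod_cast allVars_subset_qVars hFq hvF
        · exact Or.inr (by simp [qVars_cons, hvB])
      exact this
  · -- extends
    intro v cst hv
    have hvS : v ∈ ((↑(qVars c) : Set Var) ∪ ↑G.allVars) ∪ ↑F.keyVars := by
      by_contra hc
      simp [Assignment.restrict, hc] at hv
    rw [restrict_apply_of_mem hvS] at hv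
    by_cases hz : AttacksVar q F v
    · rw [hμρ hz]
      rcases hvS with hvc | hvk
      · rcases hvc with hvc | hvG
        · rw [hρθ v (Or.inl hvc)]; exact hv
        · exact absurd hz (hGZ v hvG)
      · rw [hρθ v (Or.inr hvk)]; exact hv
    · rw [hμν hz]
      rcases hvS with hvc | hvk
      · rcases hvc with hvc | hvG
        · rw [hνθ v (Or.inl (Or.inl hvc))]; exact hv
        · rw [hνG v hvG]; exact hv
      · rw [hνθ v (Or.inl (Or.inr (keyVars_subset_allVars F hvk)))]; exact hv
  · -- satisfaction
    intro H hH
    rcases List.mem_cons.1 hH with rfl | hH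
    · -- F
      have : applyAtom μ H = applyAtom ρ H := applyAtom_congr hμρF
      rw [this]
      exact htrans ρ H hFrel (hρsat H (List.mem_cons_self))
    · -- H ∈ B
      by_cases htouch : ∃ z ∈ H.allVars, AttacksVar q F z
      · obtain ⟨z, hz, hatt⟩ := htouch
        have : applyAtom μ H = applyAtom ρ H :=
          applyAtom_congr (hμρtouch H (hBq H hH) z hz hatt)
        rw [this]
        exact htrans ρ H (hBrel H hH) (hρsat H (by simp [hH]))
      · push_neg at htouch
        have : applyAtom μ H = applyAtom ν H :=
          applyAtom_congr (fun x hx => hμν (htouch x hx))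
        rw [this]
        exact htrans ν H (hBrel H hH) (hνsat H (by simp [hH]))

end Aux7
section Aux8

open List

/-- The level-(m+1) universal condition, expressed via the top assignment. -/
def CondAt (q : List DBAtom) (db : Finset DBFact) (θ : Assignment) (m : ℕ) : Prop :=
  ∀ r, IsRepair db r →
    Entails r (θ.restrict (↑(uVars q m) ∪ ↑(headKey (q.drop m)))) (q.drop m)

def BaseCond (q : List DBAtom) (db : Finset DBFact) : Prop :=
  ∀ r, IsRepair db r → Entails r emptyAssignment q

lemma uVars_subset_qVars (q : List DBAtom) (m : ℕ) : uVars q m ⊆ qVars q := by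
  intro x hx
  obtain ⟨H, hH, hxH⟩ := mem_qVars_iff.1 hx
  exact mem_qVars_iff.2 ⟨H, List.take_subset m q hH, hxH⟩

lemma uVars_mono (q : List DBAtom) {m m' : ℕ} (h : m ≤ m') :
    uVars q m ⊆ uVars q m' := by
  intro x hx
  obtain ⟨H, hH, hxH⟩ := mem_qVars_iff.1 hx
  refine mem_qVars_iff.2 ⟨H, ?_, hxH⟩
  have : q.take m = (q.take m').take m := by rw [List.take_take, min_eq_left h]
  rw [this] at hH
  exact List.take_subset m (q.take m') hH

lemma headKey_subset_uVars_succ (q : List DBAtom) (m : ℕ) :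
    (headKey (q.drop m) : Finset Var) ⊆ uVars q (m + 1) := by
  by_cases h : m < q.length
  · have hd : q.drop m = q.get ⟨m, h⟩ :: q.drop (m + 1) :=
      (List.drop_eq_getElem_cons h).symm ▸ rfl
    have hget : q.get ⟨m, h⟩ ∈ q.take (m + 1) := by
      rw [List.take_succ]
      refine List.mem_append.2 (Or.inr ?_)
      simp [List.getElem?_eq_getElem h]
    intro x hx
    rw [hd] at hx
    simp only [headKey] at hx
    exact mem_qVars_iff.2 ⟨_, hget, keyVars_subset_allVars _ (by exact hx)⟩
  · push_neg at h
    rw [List.drop_eq_nil_of_le h]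
    simp [headKey]

lemma forallEmb_base_cond {q : List DBAtom} {db : Finset DBFact} :
    ∀ (ℓ : ℕ) (θ' : Assignment), IsForallEmb q db ℓ θ' → BaseCond q db := by
  intro ℓ
  induction ℓ with
  | zero => intro θ' h; exact h.2
  | succ n ih => intro θ' h; exact ih _ h.2.2

lemma forallEmb_elim {q : List DBAtom} {db : Finset DBFact} {θ : Assignment} :
    ∀ (ℓ : ℕ), IsForallEmb q db ℓ (θ.restrict ↑(uVars q ℓ)) →
      ∀ m, m < ℓ → CondAt q db θ m := by
  intro ℓ
  induction ℓ with
  | zero => intro _ m hm; omega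
  | succ n ih =>
    intro h m hm
    obtain ⟨hL, hcond, hrec⟩ := h
    rcases Nat.lt_succ_iff_lt_or_eq.1 hm with hlt | rfl
    · refine ih ?_ m hlt
      rwa [restrict_restrict, Set.inter_eq_right.2 (by exact_mod_cast uVars_mono q (Nat.le_succ n))] at hrec
    · intro r hr
      have := hcond r hr
      rwa [restrict_restrict, Set.inter_eq_right.2 ?_] at this
      apply Set.union_subset
      · exact_mod_cast uVars_mono q (Nat.le_succ m)
      · exact_mod_cast headKey_subset_uVars_succ q m

lemma forallEmb_build {q : List DBAtom} {db : Finset DBFact} {θ : Assignment}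
    (hdom : θ.Dom = ↑(qVars q)) (hdb : Entails db θ q) (hbase : BaseCond q db) :
    ∀ (ℓ : ℕ), (∀ m, m < ℓ → CondAt q db θ m) →
      IsForallEmb q db ℓ (θ.restrict ↑(uVars q ℓ)) := by
  intro ℓ
  induction ℓ with
  | zero =>
    intro _
    refine ⟨⟨?_, Entails.of_restrict _ hdb⟩, hbase⟩
    rw [restrict_dom]
    simp [uVars]
  | succ n ih =>
    intro hconds
    refine ⟨⟨?_, Entails.of_restrict _ hdb⟩, ?_, ?_⟩
    · rw [restrict_dom, hdom]
      exact Set.inter_eq_right.2 (by exact_mod_cast uVars_subset_qVars q (n+1))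
    · intro r hr
      have := hconds n (Nat.lt_succ_self n) r hr
      rwa [restrict_restrict, Set.inter_eq_right.2 ?_]
      apply Set.union_subset
      · exact_mod_cast uVars_mono q (Nat.le_succ n)
      · exact_mod_cast headKey_subset_uVars_succ q n
    · rw [restrict_restrict,
        Set.inter_eq_right.2 (by exact_mod_cast uVars_mono q (Nat.le_succ n))]
      exact ih (fun m hm => hconds m (Nat.lt_succ_of_lt hm))

/-- Characterization of full ∀embeddings. -/
lemma forallEmb_iff {q : List DBAtom} {db : Finset DBFact} {θ : Assignment} :
    IsForallEmb q db q.length θ ↔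
      θ.Dom = ↑(qVars q) ∧ Entails db θ q ∧ BaseCond q db ∧
        ∀ m, m < q.length → CondAt q db θ m := by
  have huq : uVars q q.length = qVars q := by
    simp [uVars, List.take_length]
  constructor
  · intro h
    have hdom : θ.Dom = ↑(qVars q) := by
      cases hq : q.length with
      | zero =>
        rw [hq] at h
        have := h.1.1
        rw [this]
        congr 1
        rw [← huq, hq]
      | succ n =>
        rw [hq] at h
        have := h.1.1
        rw [this]
        congr 1
        rw [← huq, hq]
    have hrestr : θ.restrict ↑(uVars q q.length) = θ := by
      rw [huq]
      exact restrict_eq_self (by rw [hdom])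
    have hdb : Entails db θ q := by
      cases hq : q.length with
      | zero => rw [hq] at h; exact h.1.2
      | succ n => rw [hq] at h; exact h.1.2
    refine ⟨hdom, hdb, forallEmb_base_cond _ _ h, ?_⟩
    exact forallEmb_elim q.length (by rwa [hrestr])
  · rintro ⟨hdom, hdb, hbase, hconds⟩
    have := forallEmb_build hdom hdb hbase q.length hconds
    have hrestr : θ.restrict ↑(uVars q q.length) = θ := by
      rw [huq]
      exact restrict_eq_self (by rw [hdom])
    rwa [hrestr] at this

end Aux8
section Aux9

open List

@[simp] lemma headKey_cons (F : DBAtom) (l : List DBAtom) :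
    headKey (F :: l) = F.keyVars := rfl

lemma headKey_append {l l' : List DBAtom} (h : l ≠ []) :
    headKey (l ++ l') = headKey l := by
  cases l with
  | nil => exact absurd rfl h
  | cons a t => rfl

/-- **The swap theorem**: swapping two adjacent mutually non-attacking atoms
preserves ∀embeddings. -/
lemma swap_step {c B : List DBAtom} {F G : DBAtom} {db : Finset DBFact} {θ : Assignment}
    (hsjf : SelfJoinFree (c ++ F :: G :: B))
    (hFG : ¬ AttacksAtom (c ++ F :: G :: B) F G)
    (hGF : ¬ AttacksAtom (c ++ F :: G :: B) G F)
    (h : IsForallEmb (c ++ F :: G :: B) db (c ++ F :: G :: B).length θ) :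
    IsForallEmb (c ++ G :: F :: B) db (c ++ G :: F :: B).length θ := by
  classical
  set q₁ : List DBAtom := c ++ F :: G :: B with hq₁
  set q₂ : List DBAtom := c ++ G :: F :: B with hq₂
  have hperm : q₁.Perm q₂ := List.Perm.append_left c (List.Perm.swap G F B)
  set k := c.length with hk
  rw [forallEmb_iff] at h ⊢
  obtain ⟨hdom, hdb, hbase, hconds⟩ := h
  have hdom₂ : θ.Dom = ↑(qVars q₂) := by rw [hdom, qVars_perm hperm]
  have hlen : q₂.length = q₁.length := (hperm.length_eq).symm
  -- basic take/drop computations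
  have hdrop₁k : q₁.drop k = F :: G :: B := by
    rw [hq₁, hk, List.drop_left]
  have hdrop₂k : q₂.drop k = G :: F :: B := by
    rw [hq₂, hk, List.drop_left]
  have htake₁k : uVars q₁ k = qVars c := by
    rw [uVars, hq₁, hk, List.take_append_of_le_length (le_refl _), List.take_length]
  have htake₂k : uVars q₂ k = qVars c := by
    rw [uVars, hq₂, hk, List.take_append_of_le_length (le_refl _), List.take_length]
  have hdrop₁k1 : q₁.drop (k + 1) = G :: B := by
    have : k + 1 = c.length + 1 := rfl
    rw [hq₁, this, List.drop_length_add_append]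
    rfl
  have hdrop₂k1 : q₂.drop (k + 1) = F :: B := by
    rw [hq₂, hk, show c.length + 1 = c.length + 1 from rfl, List.drop_length_add_append]
    rfl
  have htake₁k1 : uVars q₁ (k + 1) = qVars c ∪ F.allVars := by
    rw [uVars, hq₁, hk, List.take_length_add_append, qVars_append]
    simp [qVars_cons]
  have htake₂k1 : uVars q₂ (k + 1) = qVars c ∪ G.allVars := by
    rw [uVars, hq₂, hk, List.take_length_add_append, qVars_append]
    simp [qVars_cons]
  have hGq₁ : G ∈ q₁ := by rw [hq₁]; simp
  have hGdb : AtomIn db (applyAtom θ G) := entails_self hdom hdb G hGq₁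
  refine ⟨hdom₂, Entails.perm hperm hdb, fun r hr => Entails.perm hperm (hbase r hr), ?_⟩
  intro m hm
  intro r hr
  rcases lt_trichotomy m k with hmk | rfl | hmk
  · -- m < c.length : same prefix, permuted tails
    have htk : uVars q₂ m = uVars q₁ m := by
      rw [uVars, uVars, hq₁, hq₂, List.take_append_of_le_length (le_of_lt hmk),
        List.take_append_of_le_length (le_of_lt hmk)]
    have hcm : c.drop m ≠ [] := by
      intro hnil
      have := congrArg List.length hnil
      simp at this
      omega
    have hd₁ : q₁.drop m = c.drop m ++ F :: G :: B :=
      List.drop_append_of_le_length (le_of_lt hmk)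
    have hd₂ : q₂.drop m = c.drop m ++ G :: F :: B :=
      List.drop_append_of_le_length (le_of_lt hmk)
    have hpermtail : (q₁.drop m).Perm (q₂.drop m) := by
      rw [hd₁, hd₂]
      exact List.Perm.append_left _ (List.Perm.swap G F B)
    have hhk : headKey (q₂.drop m) = headKey (q₁.drop m) := by
      rw [hd₁, hd₂, headKey_append hcm, headKey_append hcm]
    have := hconds m (by rw [hlen] at hm; exact hm) r hr
    rw [htk, hhk]
    exact Entails.perm hpermtail this
  · -- m = k : condition C1
    have h1 := hconds k (by rw [hlen] at hm; exact hm) r hr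
    rw [hdrop₁k, htake₁k] at h1
    simp only [headKey_cons] at h1
    have h2 := hconds (k + 1) ?_ r hr
    · rw [hdrop₁k1, htake₁k1] at h2
      simp only [headKey_cons] at h2
      rw [hdrop₂k, htake₂k]
      simp only [headKey_cons]
      have hC1 := swap_C1 (q := q₁) hsjf rfl hFG hdom hr.2.1 ?_ ?_
      · exact hC1
      · exact h1
      · have : ((↑(qVars c ∪ F.allVars) : Set Var) ∪ ↑G.keyVars) =
            ((↑(qVars c) ∪ ↑F.allVars) ∪ ↑G.keyVars) := by
          simp [Finset.coe_union]
        rwa [this] at h2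
    · rw [hlen] at hm
      have : q₁.length = k + 2 + B.length := by
        rw [hq₁, hk]; simp; omega
      omega
  · -- m > k
    rcases Nat.lt_or_ge m (k + 2) with hm2 | hm2
    · -- m = k + 1 : condition C2
      have hmeq : m = k + 1 := by omega
      subst hmeq
      have h1 : ∀ r', IsRepair db r' →
          Entails r' (θ.restrict (↑(qVars c) ∪ ↑F.keyVars)) (F :: G :: B) := by
        intro r' hr'
        have := hconds k (by rw [hlen] at hm; omega) r' hr'
        rw [hdrop₁k, htake₁k] at this
        simpa only [headKey_cons] using this
      have h2 : ∀ r', IsRepair db r' →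
          Entails r' (θ.restrict ((↑(qVars c) ∪ ↑F.allVars) ∪ ↑G.keyVars)) (G :: B) := by
        intro r' hr'
        have := hconds (k + 1) (by rw [hlen] at hm; exact hm) r' hr'
        rw [hdrop₁k1, htake₁k1] at this
        simp only [headKey_cons] at this
        have hset : ((↑(qVars c ∪ F.allVars) : Set Var) ∪ ↑G.keyVars) =
            ((↑(qVars c) ∪ ↑F.allVars) ∪ ↑G.keyVars) := by
          simp [Finset.coe_union]
        rwa [hset] at this
      have hC2 := swap_C2 (q := q₁) hsjf rfl hFG hdom hGdb hr h1 h2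
      rw [hdrop₂k1, htake₂k1]
      simp only [headKey_cons]
      have hset : ((↑(qVars c ∪ G.allVars) : Set Var) ∪ ↑F.keyVars) =
          ((↑(qVars c) ∪ ↑G.allVars) ∪ ↑F.keyVars) := by
        simp [Finset.coe_union]
      rwa [hset]
    · -- m ≥ k + 2 : identical conditions
      obtain ⟨j, rfl⟩ : ∃ j, m = (k + 2) + j := ⟨m - (k + 2), by omega⟩
      have e₁ : q₁ = (c ++ [F, G]) ++ B := by rw [hq₁]; simp
      have e₂ : q₂ = (c ++ [G, F]) ++ B := by rw [hq₂]; simp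
      have hlen12 : (c ++ [F, G]).length = k + 2 := by simp [hk]
      have hlen21 : (c ++ [G, F]).length = k + 2 := by simp [hk]
      have hd₁ : q₁.drop (k + 2 + j) = B.drop j := by
        rw [e₁, ← hlen12, List.drop_length_add_append]
      have hd₂ : q₂.drop (k + 2 + j) = B.drop j := by
        rw [e₂, ← hlen21, List.drop_length_add_append]
      have ht₁ : uVars q₁ (k + 2 + j) = (qVars c ∪ (F.allVars ∪ G.allVars)) ∪ qVars (B.take j) := by
        rw [uVars, e₁, ← hlen12, List.take_length_add_append, qVars_append, qVars_append]
        simp [qVars_cons, Finset.union_assoc]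
      have ht₂ : uVars q₂ (k + 2 + j) = (qVars c ∪ (F.allVars ∪ G.allVars)) ∪ qVars (B.take j) := by
        rw [uVars, e₂, ← hlen21, List.take_length_add_append, qVars_append, qVars_append]
        simp [qVars_cons, Finset.union_assoc, Finset.union_comm G.allVars F.allVars]
      have := hconds (k + 2 + j) (by rw [hlen] at hm; exact hm) r hr
      rw [hd₁, ht₁] at this
      rw [hd₂, ht₂]
      exact this

end Aux9
section Aux10

open List

lemma topo_pairwise {q : List DBAtom} (hnd : q.Nodup) (ht : IsTopoSort q) :
    List.Pairwise (fun F G => ¬ AttacksAtom q G F) q := by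
  rw [List.pairwise_iff_get]
  intro i j hij hA
  have hne : q.get j ≠ q.get i := by
    intro he
    have : j = i := (List.Nodup.get_inj_iff hnd).1 he
    subst this
    exact lt_irrefl _ hij
  have h1 : (j : ℕ) < (i : ℕ) := ht j i hne hA
  have h2 : (i : ℕ) < (j : ℕ) := hij
  omega

/-- Bubbling an atom to the front of the suffix. -/
lemma bubble {q₁ : List DBAtom} {db : Finset DBFact} {θ : Assignment}
    (hsjf₁ : SelfJoinFree q₁) :
    ∀ (d c : List DBAtom) (a : DBAtom) (e : List DBAtom),
      (c ++ d ++ a :: e).Perm q₁ →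
      (∀ b ∈ d, ¬ AttacksAtom q₁ b a ∧ ¬ AttacksAtom q₁ a b) →
      IsForallEmb (c ++ d ++ a :: e) db (c ++ d ++ a :: e).length θ →
      IsForallEmb (c ++ a :: (d ++ e)) db (c ++ a :: (d ++ e)).length θ := by
  intro d
  induction d using List.reverseRecOn with
  | nil =>
    intro c a e hperm hatt h
    simpa using h
  | append_singleton d' b ih =>
    intro c a e hperm hatt h
    have he1 : c ++ (d' ++ [b]) ++ a :: e = (c ++ d') ++ b :: a :: e := by simp
    rw [he1] at hperm h
    have hcur : ((c ++ d') ++ b :: a :: e).Perm q₁ := hperm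
    have hsjf_cur' : SelfJoinFree ((c ++ d') ++ b :: a :: e) :=
      sjf_perm hcur.symm hsjf₁
    have hba := hatt b (by simp)
    have hnot1 : ¬ AttacksAtom ((c ++ d') ++ b :: a :: e) b a := by
      rw [attacksAtom_perm hcur]
      exact hba.1
    have hnot2 : ¬ AttacksAtom ((c ++ d') ++ b :: a :: e) a b := by
      rw [attacksAtom_perm hcur]
      exact hba.2
    have hres := swap_step hsjf_cur' hnot1 hnot2 h
    -- rearrange and use the induction hypothesis
    have he2 : (c ++ d') ++ a :: b :: e = c ++ d' ++ a :: (b :: e) := by simp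
    rw [he2] at hres
    have hperm' : (c ++ d' ++ a :: (b :: e)).Perm q₁ := by
      refine List.Perm.trans ?_ hcur
      have : ((c ++ d') ++ a :: b :: e).Perm ((c ++ d') ++ b :: a :: e) :=
        List.Perm.append_left _ (List.Perm.swap b a e)
      simpa using this
    have hatt' : ∀ x ∈ d', ¬ AttacksAtom q₁ x a ∧ ¬ AttacksAtom q₁ a x := by
      intro x hx
      exact hatt x (by simp [hx])
    have := ih c a (b :: e) hperm' hatt' hres
    have he3 : c ++ a :: (d' ++ b :: e) = c ++ a :: ((d' ++ [b]) ++ e) := by simp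
    rwa [he3] at this

/-- Transfer of ∀embeddings along a permutation of a suffix, under pairwise
non-reverse-attack conditions. -/
lemma transfer {q₁ : List DBAtom} {db : Finset DBFact} {θ : Assignment}
    (hsjf₁ : SelfJoinFree q₁) :
    ∀ (s₂ s₁ c : List DBAtom), s₁.Perm s₂ → (c ++ s₁).Perm q₁ →
      List.Pairwise (fun F G => ¬ AttacksAtom q₁ G F) (c ++ s₁) →
      List.Pairwise (fun F G => ¬ AttacksAtom q₁ G F) (c ++ s₂) →
      IsForallEmb (c ++ s₁) db (c ++ s₁).length θ →
      IsForallEmb (c ++ s₂) db (c ++ s₂).length θ := by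
  intro s₂
  induction s₂ with
  | nil =>
    intro s₁ c hp _ _ _ h
    rwa [List.Perm.eq_nil hp] at h
  | cons a t₂ ih =>
    intro s₁ c hp hq P₁ P₂ h
    have ha : a ∈ s₁ := hp.mem_iff.2 (List.mem_cons_self)
    obtain ⟨d, e, rfl⟩ := List.append_of_mem ha
    have hnd : (c ++ (d ++ a :: e)).Nodup := (hq.nodup_iff).2 (sjf_nodup hsjf₁)
    have hands : (d ++ a :: e).Nodup := (List.nodup_append.1 hnd).2.1
    have hadnotin : a ∉ d := by
      intro had
      have := (List.nodup_append.1 hands).2.2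
      exact this _ had _ List.mem_cons_self rfl
    -- attack conditions for bubbling
    have hatts : ∀ b ∈ d, ¬ AttacksAtom q₁ b a ∧ ¬ AttacksAtom q₁ a b := by
      intro b hb
      constructor
      · -- from P₂ : a before b in c ++ a :: t₂
        have hbt₂ : b ∈ t₂ := by
          have hbs₂ : b ∈ a :: t₂ := hp.mem_iff.1 (by simp [hb])
          rcases List.mem_cons.1 hbs₂ with rfl | hbt
          · exact absurd hb hadnotin
          · exact hbt
        have := (List.pairwise_append.1 P₂).2.1
        exact (List.pairwise_cons.1 this).1 b hbt₂
      · -- from P₁ : b before a in c ++ (d ++ a :: e)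
        have := (List.pairwise_append.1 P₁).2.1
        have := (List.pairwise_append.1 this).2.2
        exact this b hb a (List.mem_cons_self)
    have hperm1 : (c ++ d ++ a :: e).Perm q₁ := by simpa using hq
    have h' : IsForallEmb (c ++ d ++ a :: e) db (c ++ d ++ a :: e).length θ := by
      have : c ++ (d ++ a :: e) = c ++ d ++ a :: e := by simp
      rwa [this] at h
    have hb := bubble hsjf₁ d c a e hperm1 hatts h'
    -- set up the induction hypothesis
    have hpm : (d ++ a :: e).Perm (a :: (d ++ e)) := List.perm_middle
    have hperm' : ((c ++ [a]) ++ (d ++ e)).Perm q₁ := by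
      have h1 : ((c ++ [a]) ++ (d ++ e)) = c ++ (a :: (d ++ e)) := by simp
      rw [h1]
      exact (List.Perm.append_left c hpm.symm).trans hq
    have hptail : (d ++ e).Perm t₂ := by
      have h1 : (d ++ a :: e).Perm (a :: t₂) := hp
      have h2 : (a :: (d ++ e)).Perm (a :: t₂) := hpm.symm.trans h1
      exact h2.cons_inv
    -- rebuild the pairwise facts
    have P₁' : List.Pairwise (fun F G => ¬ AttacksAtom q₁ G F) ((c ++ [a]) ++ (d ++ e)) := by
      have hP := List.pairwise_append.1 P₁
      have hPde' := List.pairwise_append.1 hP.2.1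
      refine List.pairwise_append.2 ⟨?_, ?_, ?_⟩
      · -- c ++ [a]
        refine List.pairwise_append.2 ⟨hP.1, List.pairwise_singleton _ _, ?_⟩
        intro x hx y hy
        rw [List.mem_singleton.1 hy]
        exact hP.2.2 x hx a (by simp)
      · -- d ++ e pairwise
        refine List.Pairwise.sublist ?_ hP.2.1
        exact List.Sublist.append_left (List.sublist_cons_self a e) d
      · -- cross
        intro x hx y hy
        rcases List.mem_append.1 hx with hxc | hxa
        · exact hP.2.2 x hxc y (by
            rcases List.mem_append.1 hy with h | h
            · simp [h]
            · simp [h])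
        · rw [List.mem_singleton.1 hxa]
          rcases List.mem_append.1 hy with hyd | hye
          · exact (hatts y hyd).1
          · exact (List.pairwise_cons.1 hPde'.2.1).1 y hye
    have P₂' : List.Pairwise (fun F G => ¬ AttacksAtom q₁ G F) ((c ++ [a]) ++ t₂) := by
      have : (c ++ [a]) ++ t₂ = c ++ a :: t₂ := by simp
      rw [this]
      exact P₂
    have := ih (d ++ e) (c ++ [a]) hptail hperm' P₁' P₂' (by
      have : (c ++ [a]) ++ (d ++ e) = c ++ a :: (d ++ e) := by simp
      rw [this]
      exact hb)
    have hfin : (c ++ [a]) ++ t₂ = c ++ a :: t₂ := by simp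
    rwa [hfin] at this

end Aux10
/-- All topological sorts of an acyclic attack graph yield the same
n-∀embeddings. -/
theorem stmt0
    (q₁ q₂ : List DBAtom) (hperm : q₁.Perm q₂)
    (hsjf : SelfJoinFree q₁)
    (ht₁ : IsTopoSort q₁) (ht₂ : IsTopoSort q₂)
    (db : Finset DBFact) (θ : Assignment)
    (h : IsForallEmb q₁ db q₁.length θ) :
    IsForallEmb q₂ db q₂.length θ := by
  have hsjf₂ : SelfJoinFree q₂ := sjf_perm hperm hsjf
  have P₁ : List.Pairwise (fun F G => ¬ AttacksAtom q₁ G F) q₁ :=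
    topo_pairwise (sjf_nodup hsjf) ht₁
  have P₂q : List.Pairwise (fun F G => ¬ AttacksAtom q₂ G F) q₂ :=
    topo_pairwise (sjf_nodup hsjf₂) ht₂
  have P₂ : List.Pairwise (fun F G => ¬ AttacksAtom q₁ G F) q₂ := by
    refine P₂q.imp ?_
    intro F G hn hA
    exact hn ((attacksAtom_perm hperm G F).1 hA)
  have := transfer hsjf q₂ q₁ [] hperm (by simpa using List.Perm.refl q₁)
    (by simpa using P₁) (by simpa using P₂) (by simpa using h)
  simpa using this
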